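/- Let Q = ∏_k [a_k, b_k) be an infinite-dimensional rectangle with b_k − a_k > 0, inf_k (b_k − a_k) > 0, and Σ_k |b_k − a_k − 1| < ∞ (so that ∏_k (b_k−a_k) converges to a positive number L). Let h = (h_k) ∈ ℓ¹. Then for all sufficiently small t > 0, ∏_k (b_k − a_k − t|h_k|) converges, and L − ∏_k (b_k − a_k − t|h_k|) ≤ L · Σ_k t|h_k|/(b_k − a_k). -/

import Mathlib

open Filter Topology Finset

/-- Finite Weierstrass inequality: `∏ (1 - ε k) ≥ 1 - ∑ ε k` for `ε k ∈ [0,1]`. -/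
private lemma weierstrass_finset (ε : ℕ → ℝ) (h0 : ∀ k, 0 ≤ ε k) (h1 : ∀ k, ε k ≤ 1) :
    ∀ s : Finset ℕ, 1 - ∑ k ∈ s, ε k ≤ ∏ k ∈ s, (1 - ε k) := by
  intro s
  induction s using Finset.induction_on with
  | empty => simp
  | insert _ _ hx ih =>
    rename_i i s'
    rw [Finset.prod_insert hx, Finset.sum_insert hx]
    have hprod : 0 ≤ ∏ k ∈ s', (1 - ε k) :=
      Finset.prod_nonneg fun k _ => by linarith [h1 k]
    have hsum : 0 ≤ ∑ k ∈ s', ε k := Finset.sum_nonneg fun k _ => h0 k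
    nlinarith [h0 i, h1 i]

/-- Bound on `|log x|` for `x` bounded away from `0`. -/
private lemma abs_log_le (δ x : ℝ) (hδ : 0 < δ) (hx : δ ≤ x) :
    |Real.log x| ≤ |x - 1| / min δ 1 := by
  have hxpos : 0 < x := lt_of_lt_of_le hδ hx
  have hmin : 0 < min δ 1 := lt_min hδ one_pos
  rcases le_or_gt 1 x with h | h
  · have h1 : Real.log x ≤ x - 1 := by
      have := Real.log_le_sub_one_of_pos hxpos; linarith
    have h2 : 0 ≤ Real.log x := Real.log_nonneg h
    rw [abs_of_nonneg h2, abs_of_nonneg (by linarith)]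
    calc Real.log x ≤ x - 1 := h1
      _ ≤ (x - 1) / min δ 1 := by
        rw [le_div_iff₀ hmin]
        nlinarith [min_le_right δ 1]
  · have h2 : Real.log x ≤ 0 := Real.log_nonpos (le_of_lt hxpos) (le_of_lt h)
    rw [abs_of_nonpos h2, abs_of_neg (by linarith)]
    have hinv : Real.log x⁻¹ ≤ x⁻¹ - 1 := by
      have := Real.log_le_sub_one_of_pos (inv_pos.mpr hxpos); linarith
    rw [Real.log_inv] at hinv
    have hx1 : -Real.log x ≤ (1 - x) / x := by
      have hxx : (1 - x) / x = x⁻¹ - 1 := by field_simp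
      rw [hxx]; linarith
    calc -Real.log x ≤ (1 - x) / x := hx1
      _ ≤ (1 - x) / min δ 1 := by
        apply div_le_div_of_nonneg_left (by linarith) hmin
        exact le_trans (min_le_left δ 1) hx
      _ = -(x - 1) / min δ 1 := by rw [neg_sub]

/-- A positive sequence bounded below with summable `|f - 1|` has a positive product. -/
private lemma hasProd_of_summable (f : ℕ → ℝ) (δ : ℝ) (hδ : 0 < δ) (hf : ∀ k, δ ≤ f k)
    (hs : Summable fun k => |f k - 1|) :
    HasProd f (Real.exp (∑' k, Real.log (f k))) := by
  have hlog : Summable fun k => Real.log (f k) := by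
    apply Summable.of_norm
    apply Summable.of_nonneg_of_le (fun k => norm_nonneg _)
      (fun k => ?_) (hs.div_const (min δ 1))
    simpa [Real.norm_eq_abs] using abs_log_le δ (f k) hδ (hf k)
  have hfe : (Real.exp ∘ fun k => Real.log (f k)) = f := by
    funext k
    exact Real.exp_log (lt_of_lt_of_le hδ (hf k))
  have := hlog.hasSum.rexp
  rwa [hfe] at this

/-- For an infinite-dimensional rectangle `Q = ∏_k [a_k, b_k)` with side lengths
bounded away from `0` and `Σ_k |b_k − a_k − 1| < ∞`, and `h ∈ ℓ¹`, for all
sufficiently small `t > 0` the product `∏_k (b_k − a_k − t|h_k|)` converges and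
its deficit from `L = ∏_k (b_k − a_k)` is at most `L · Σ_k t|h_k|/(b_k − a_k)`. -/
theorem shifted_block_overlap_estimate (a b h : ℕ → ℝ)
    (hside : ∀ k, 0 < b k - a k) (hinf : ∃ ε > 0, ∀ k, ε ≤ b k - a k)
    (hsum : Summable fun k => |b k - a k - 1|)
    (hh : Summable fun k => |h k|) :
    ∃ t₀ > 0, ∀ t : ℝ, 0 < t → t < t₀ →
      Multipliable (fun k => b k - a k - t * |h k|) ∧
      (∏' k, (b k - a k)) - (∏' k, (b k - a k - t * |h k|))
        ≤ (∏' k, (b k - a k)) * ∑' k, t * |h k| / (b k - a k) := by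
  obtain ⟨ε, εpos, hε⟩ := hinf
  set c : ℕ → ℝ := fun k => b k - a k with hc
  set Sh : ℝ := ∑' k, |h k| with hSh
  have hShnn : 0 ≤ Sh := tsum_nonneg fun k => abs_nonneg _
  have hhle : ∀ k, |h k| ≤ Sh := fun k => Summable.le_tsum hh k fun j _ => abs_nonneg _
  refine ⟨ε / (2 * (Sh + 1)), by positivity, fun t ht ht₀ => ?_⟩
  -- basic bounds
  have hth : ∀ k, t * |h k| < ε / 2 := by
    intro k
    calc t * |h k| ≤ t * (Sh + 1) := by
          apply mul_le_mul_of_nonneg_left _ (le_of_lt ht)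
          linarith [hhle k]
      _ < (ε / (2 * (Sh + 1))) * (Sh + 1) := by
          apply mul_lt_mul_of_pos_right ht₀ (by linarith)
      _ = ε / 2 := by field_simp
  have hthnn : ∀ k, 0 ≤ t * |h k| := fun k => mul_nonneg (le_of_lt ht) (abs_nonneg _)
  set g : ℕ → ℝ := fun k => c k - t * |h k| with hg
  have hglb : ∀ k, ε / 2 ≤ g k := by
    intro k; have := hε k; have := hth k; simp only [hg, hc]; linarith
  -- products
  have hcprod : HasProd c (Real.exp (∑' k, Real.log (c k))) :=
    hasProd_of_summable c ε εpos hε hsum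
  have hgsum : Summable fun k => |g k - 1| := by
    apply Summable.of_nonneg_of_le (fun k => abs_nonneg _) (fun k => ?_)
      (hsum.add (hh.mul_left t))
    simp only [hg, hc]
    have h2 := abs_sub (b k - a k - 1) (t * |h k|)
    rw [abs_of_nonneg (hthnn k)] at h2
    have h3 : b k - a k - t * |h k| - 1 = (b k - a k - 1) - t * |h k| := by ring
    rw [h3]
    exact h2
  have hgprod : HasProd g (Real.exp (∑' k, Real.log (g k))) :=
    hasProd_of_summable g (ε / 2) (by linarith) hglb hgsum
  refine ⟨hgprod.multipliable, ?_⟩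
  -- the epsilon sequence
  set e : ℕ → ℝ := fun k => t * |h k| / (b k - a k) with he
  have he0 : ∀ k, 0 ≤ e k := fun k => div_nonneg (hthnn k) (le_of_lt (hside k))
  have he1 : ∀ k, e k ≤ 1 := by
    intro k
    rw [he, div_le_one (hside k)]
    have := hth k; have := hε k; linarith
  have hesum : Summable e := by
    apply Summable.of_nonneg_of_le he0 (fun k => ?_) ((hh.mul_left t).div_const ε)
    simp only [he]
    apply div_le_div_of_nonneg_left (hthnn k) εpos (hε k)
  set L : ℝ := ∏' k, c k with hL
  set P : ℝ := ∏' k, g k with hP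
  have hLval : L = Real.exp (∑' k, Real.log (c k)) := hcprod.tprod_eq
  have hLpos : 0 < L := hLval ▸ Real.exp_pos _
  set S : ℝ := ∑' k, e k with hS
  -- finite inequality and passage to the limit
  have hfin : ∀ s : Finset ℕ, (∏ k ∈ s, c k) * (1 - ∑ k ∈ s, e k) ≤ ∏ k ∈ s, g k := by
    intro s
    have hfactor : ∀ k, g k = c k * (1 - e k) := by
      intro k
      show c k - t * |h k| = c k * (1 - t * |h k| / (b k - a k))
      have : c k = b k - a k := rfl
      field_simp [this, ne_of_gt (hside k)]
      rw [this]; ring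
    rw [Finset.prod_congr rfl fun k _ => hfactor k, Finset.prod_mul_distrib]
    apply mul_le_mul_of_nonneg_left (weierstrass_finset e he0 he1 s)
      (Finset.prod_nonneg fun k _ => le_of_lt (lt_of_lt_of_le εpos (hε k)))
  have hctend : Tendsto (fun s : Finset ℕ => ∏ k ∈ s, c k) atTop (𝓝 L) :=
    hLval ▸ hcprod
  have hgtend : Tendsto (fun s : Finset ℕ => ∏ k ∈ s, g k) atTop (𝓝 P) := by
    have hPval : P = Real.exp (∑' k, Real.log (g k)) := hgprod.tprod_eq
    rw [hPval]; exact hgprod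
  have hetend : Tendsto (fun s : Finset ℕ => ∑ k ∈ s, e k) atTop (𝓝 S) :=
    hesum.hasSum
  have hlim : L * (1 - S) ≤ P := by
    apply le_of_tendsto_of_tendsto'
      (f := fun s : Finset ℕ => (∏ k ∈ s, c k) * (1 - ∑ k ∈ s, e k))
      (g := fun s : Finset ℕ => ∏ k ∈ s, g k)
      (hctend.mul ((tendsto_const_nhds (x := (1:ℝ))).sub hetend)) hgtend hfin
  have : L - P ≤ L * S := by nlinarith
  simpa [hL, hP, hS, hc, hg, he] using this
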